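/- arXiv:2308.16749 — 2 statements merged into one kernel-verified Lean document; each statement's English description precedes it below -/
import Mathlib

section
/- For every integer k ≥ 0, the polynomial identity R_k = Σ_{i=0}^{k} t_{k,i} · e_i holds in F[z], where t_{k,i} = {2k+1}! {2i+2} / ({k+i+2}! {k−i}!). -/
open Finset

noncomputable section

/-- The field `F = ℚ(𝔮)` of rational functions over `ℚ` in an indeterminate `𝔮`. -/
abbrev F : Type := RatFunc ℚ

/-- The indeterminate `𝔮`. -/
noncomputable def qv : F := RatFunc.X

/-- `{n} = 𝔮^n - 𝔮^{-n}` for `n : ℤ`. -/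
def brc (n : ℤ) : F := qv ^ n - qv ^ (-n)

/-- `[n] = {n}/{1}`. -/
def brk (n : ℤ) : F := brc n / brc 1

/-- `{n}! = ∏_{j=1}^n {j}`. -/
def brcFac (n : ℕ) : F := ∏ j ∈ Finset.range n, brc ((j : ℤ) + 1)

/-- `[n]! = ∏_{j=1}^n [j]`. -/
def brkFac (n : ℕ) : F := ∏ j ∈ Finset.range n, brk ((j : ℤ) + 1)

/-- `q = 𝔮²`. -/
def qq : F := qv ^ 2

/-- The q-Pochhammer symbol `(x; q)_k = ∏_{j=0}^{k-1} (1 - x q^j)`. -/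
def poch (x : F) (k : ℕ) : F := ∏ j ∈ Finset.range k, (1 - x * qq ^ j)

/-- The q-binomial coefficient `[n choose i]_q`. -/
def qbinom (n i : ℕ) : F := poch qq n / (poch qq i * poch qq (n - i))

/-- The Chebyshev-like basis `e_i` of `F[z]`: `e_0 = 1`, `e_1 = z`, `e_i = z e_{i-1} - e_{i-2}`. -/
noncomputable def e : ℕ → Polynomial F
  | 0 => 1
  | 1 => Polynomial.X
  | (i + 2) => Polynomial.X * e (i + 1) - e i

/-- `λ_i = -𝔮^{i+1} - 𝔮^{-i-1}`. -/
def lam (i : ℤ) : F := -qv ^ (i + 1) - qv ^ (-(i + 1))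

/-- `R_n = ∏_{i=0}^{n-1} (z - λ_{2i})`. -/
noncomputable def R (n : ℕ) : Polynomial F :=
  ∏ i ∈ Finset.range n, (Polynomial.X - Polynomial.C (lam (2 * (i : ℤ))))

/-- `t_{k,i} = {2k+1}! {2i+2} / ({k+i+2}! {k-i}!)` for `0 ≤ i ≤ k`. -/
def tcoef (k i : ℕ) : F :=
  brcFac (2 * k + 1) * brc (2 * (i : ℤ) + 2) / (brcFac (k + i + 2) * brcFac (k - i))

/-! ### Auxiliary lemmas -/

lemma qv_ne_zero : qv ≠ 0 := RatFunc.X_ne_zero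

lemma qv_zpow_ne_zero (m : ℤ) : qv ^ m ≠ 0 := zpow_ne_zero m qv_ne_zero

lemma qv_pow_ne_one {m : ℕ} (hm : m ≠ 0) : qv ^ m ≠ 1 := by
  intro h
  have h1 : (Polynomial.X : Polynomial ℚ) ^ m = 1 := by
    apply RatFunc.algebraMap_injective ℚ
    simpa [qv, RatFunc.algebraMap_X, map_pow] using h
  have h2 := congrArg Polynomial.natDegree h1
  simp [Polynomial.natDegree_X_pow] at h2
  exact hm h2

lemma brc_ne_zero {n : ℤ} (h : 0 < n) : brc n ≠ 0 := by
  intro hb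
  have hq := qv_ne_zero
  have h1 : qv ^ n = qv ^ (-n) := by rwa [brc, sub_eq_zero] at hb
  have h2 : qv ^ n * qv ^ n = 1 := by
    nth_rewrite 1 [h1]
    rw [← zpow_add₀ hq, neg_add_cancel, zpow_zero]
  have h3 : qv ^ (n.toNat) * qv ^ (n.toNat) = 1 := by
    rw [← zpow_natCast qv n.toNat, Int.toNat_of_nonneg h.le]; exact h2
  rw [← pow_add] at h3
  exact qv_pow_ne_one (by omega) h3

lemma brc_zero : brc 0 = 0 := by simp [brc]

lemma brcFac_succ (n : ℕ) : brcFac (n + 1) = brcFac n * brc ((n : ℤ) + 1) :=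
  Finset.prod_range_succ _ _

lemma brcFac_zero : brcFac 0 = 1 := Finset.prod_range_zero _

lemma brcFac_ne_zero (n : ℕ) : brcFac n ≠ 0 := by
  rw [brcFac, Finset.prod_ne_zero_iff]
  intro j _
  exact brc_ne_zero (by positivity)

/-- The key Laurent-polynomial identity, in canonical form. -/
lemma Lident (N D : ℤ) :
    brc (2*N+2*D+2) * brc (2*N+2*D+3) * brc (2*N+2)
    = brc (2*N) * brc (2*N+D+2) * brc (2*N+D+3)
      + brc (2*N+4) * brc D * brc (D+1)
      - lam (2*N+2*D) * (brc (2*N+2) * brc (2*N+D+3) * brc (D+1)) := by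
  have hq := qv_ne_zero
  have hz : ∀ m : ℤ, qv ^ m ≠ 0 := fun m => zpow_ne_zero m hq
  have hbrc : ∀ m : ℤ, brc m = (qv ^ m * qv ^ m - 1) / qv ^ m := by
    intro m
    rw [brc, zpow_neg, eq_div_iff (hz m), sub_mul, inv_mul_cancel₀ (hz m)]
  have hlam : ∀ m : ℤ, lam m = -((qv ^ (m+1) * qv ^ (m+1) + 1) / qv ^ (m+1)) := by
    intro m
    have hx := hz (m+1)
    have h2 : (qv ^ (m+1) * qv ^ (m+1) + 1) / qv ^ (m+1) = qv ^ (m+1) + (qv ^ (m+1))⁻¹ := by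
      rw [add_div, mul_div_assoc, div_self hx, mul_one, one_div]
    rw [lam, zpow_neg, h2]
    ring
  simp only [hbrc, hlam]
  rw [neg_mul, sub_neg_eq_add]
  simp only [div_mul_div_comm]
  rw [div_add_div _ _ (by exact mul_ne_zero (mul_ne_zero (hz _) (hz _)) (hz _)) (by exact mul_ne_zero (mul_ne_zero (hz _) (hz _)) (hz _)),
      div_add_div _ _ (by exact mul_ne_zero (mul_ne_zero (mul_ne_zero (hz _) (hz _)) (hz _)) (mul_ne_zero (mul_ne_zero (hz _) (hz _)) (hz _))) (by exact mul_ne_zero (hz _) (mul_ne_zero (mul_ne_zero (hz _) (hz _)) (hz _))),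
      div_eq_div_iff (by exact mul_ne_zero (mul_ne_zero (hz _) (hz _)) (hz _)) (by exact mul_ne_zero (mul_ne_zero (mul_ne_zero (mul_ne_zero (hz _) (hz _)) (hz _)) (mul_ne_zero (mul_ne_zero (hz _) (hz _)) (hz _))) (mul_ne_zero (hz _) (mul_ne_zero (mul_ne_zero (hz _) (hz _)) (hz _))))]
  simp only [show ∀ m:ℤ, 2*m = m+m from fun m => two_mul m,
    show ∀ m:ℤ, m+2 = m+1+1 from fun m => by ring,
    show ∀ m:ℤ, m+3 = m+1+1+1 from fun m => by ring,
    show ∀ m:ℤ, m+4 = m+1+1+1+1 from fun m => by ring,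
    zpow_add₀ hq, zpow_one]
  ring

lemma tcoef_self (k : ℕ) : tcoef k k = 1 := by
  have h1 : brcFac (k+k+2) = brcFac (2*k+1) * brc (2*(k:ℤ)+2) := by
    rw [show k+k+2 = (2*k+1)+1 from by omega, brcFac_succ,
      show ((2*k+1 : ℕ) : ℤ) + 1 = 2*(k:ℤ)+2 from by push_cast; ring]
  rw [tcoef, Nat.sub_self, brcFac_zero, mul_one, h1]
  exact div_self (mul_ne_zero (brcFac_ne_zero _) (brc_ne_zero (by positivity)))

/-- The coefficient recurrence, ℕ-indexed form. -/
lemma star' (n d : ℕ) :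
    tcoef (n+d+1) n
    = (if n = 0 then 0 else tcoef (n+d) (n-1))
      + (if d = 0 then 0 else tcoef (n+d) (n+1))
      - lam (2*(n:ℤ)+2*(d:ℤ)) * tcoef (n+d) n := by
  have c1 : tcoef (n+d+1) n
      = brcFac (2*(n+d)+1) * (brc (2*(n:ℤ)+2*(d:ℤ)+2) * brc (2*(n:ℤ)+2*(d:ℤ)+3) * brc (2*(n:ℤ)+2))
        / (brcFac ((n+d)+n+3) * brcFac (d+1)) := by
    have hA : brcFac (2*(n+d+1)+1)
        = brcFac (2*(n+d)+1) * brc (2*(n:ℤ)+2*(d:ℤ)+2) * brc (2*(n:ℤ)+2*(d:ℤ)+3) := by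
      rw [show 2*(n+d+1)+1 = ((2*(n+d)+1)+1)+1 from by omega, brcFac_succ, brcFac_succ,
        show (((2*(n+d)+1 : ℕ) : ℤ)) + 1 = 2*(n:ℤ)+2*(d:ℤ)+2 from by push_cast; ring,
        show ((((2*(n+d)+1)+1 : ℕ) : ℤ)) + 1 = 2*(n:ℤ)+2*(d:ℤ)+3 from by push_cast; ring]
    have hB : brcFac ((n+d+1)+n+2) = brcFac ((n+d)+n+3) := congrArg brcFac (by omega)
    have hC : brcFac ((n+d+1)-n) = brcFac (d+1) := congrArg brcFac (by omega)
    rw [tcoef, hA, hB, hC]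
    ring
  have c2 : (if n = 0 then 0 else tcoef (n+d) (n-1))
      = brcFac (2*(n+d)+1) * (brc (2*(n:ℤ)) * brc (2*(n:ℤ)+(d:ℤ)+2) * brc (2*(n:ℤ)+(d:ℤ)+3))
        / (brcFac ((n+d)+n+3) * brcFac (d+1)) := by
    rcases n with _ | m
    · simp [brc]
    · have hB : brcFac ((m+1+d)+(m+1)+3)
          = brcFac ((m+1+d)+m+2) * brc (2*((m+1:ℕ):ℤ)+(d:ℤ)+2) * brc (2*((m+1:ℕ):ℤ)+(d:ℤ)+3) := by
        rw [show (m+1+d)+(m+1)+3 = (((m+1+d)+m+2)+1)+1 from by omega, brcFac_succ, brcFac_succ,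
          show ((((m+1+d)+m+2 : ℕ) : ℤ)) + 1 = 2*((m+1:ℕ):ℤ)+(d:ℤ)+2 from by push_cast; ring,
          show (((((m+1+d)+m+2)+1 : ℕ) : ℤ)) + 1 = 2*((m+1:ℕ):ℤ)+(d:ℤ)+3 from by push_cast; ring]
      have hC : brcFac ((m+1+d)-m) = brcFac (d+1) := congrArg brcFac (by omega)
      have hD : brc (2*((m:ℕ):ℤ)+2) = brc (2*((m+1:ℕ):ℤ)) := congrArg brc (by push_cast; ring)
      have h1 : brcFac ((m+1+d)+m+2) ≠ 0 := brcFac_ne_zero _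
      have h2 : brcFac (d+1) ≠ 0 := brcFac_ne_zero _
      have h3 : brc (2*((m+1:ℕ):ℤ)+(d:ℤ)+2) ≠ 0 := brc_ne_zero (by omega)
      have h4 : brc (2*((m+1:ℕ):ℤ)+(d:ℤ)+3) ≠ 0 := brc_ne_zero (by omega)
      rw [if_neg (Nat.succ_ne_zero m), Nat.succ_sub_one, tcoef, hB, hC, hD,
        div_eq_div_iff (mul_ne_zero h1 h2) (mul_ne_zero (mul_ne_zero (mul_ne_zero h1 h3) h4) h2)]
      ring
  have c3 : (if d = 0 then 0 else tcoef (n+d) (n+1))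
      = brcFac (2*(n+d)+1) * (brc (2*(n:ℤ)+4) * brc (d:ℤ) * brc ((d:ℤ)+1))
        / (brcFac ((n+d)+n+3) * brcFac (d+1)) := by
    rcases d with _ | ed
    · simp [brc]
    · have hB : brcFac ((n+(ed+1))+(n+1)+2) = brcFac ((n+(ed+1))+n+3) :=
        congrArg brcFac (by omega)
      have hE : brcFac ((n+(ed+1))-(n+1)) = brcFac ed := congrArg brcFac (by omega)
      have hC : brcFac (ed+1+1) = brcFac ed * brc ((ed+1:ℕ):ℤ) * brc (((ed+1:ℕ):ℤ)+1) := by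
        rw [brcFac_succ, brcFac_succ,
          show ((ed:ℕ):ℤ)+1 = ((ed+1:ℕ):ℤ) from by push_cast; ring]
      have hD : brc (2*((n+1:ℕ):ℤ)+2) = brc (2*(n:ℤ)+4) := congrArg brc (by push_cast; ring)
      have h1 : brcFac ((n+(ed+1))+n+3) ≠ 0 := brcFac_ne_zero _
      have h2 : brcFac ed ≠ 0 := brcFac_ne_zero _
      have h3 : brc ((ed+1:ℕ):ℤ) ≠ 0 := brc_ne_zero (by omega)
      have h4 : brc (((ed+1:ℕ):ℤ)+1) ≠ 0 := brc_ne_zero (by omega)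
      rw [if_neg (Nat.succ_ne_zero ed), tcoef, hB, hE, hC, hD,
        div_eq_div_iff (mul_ne_zero h1 h2) (mul_ne_zero h1 (mul_ne_zero (mul_ne_zero h2 h3) h4))]
      ring
  have c4 : tcoef (n+d) n
      = brcFac (2*(n+d)+1) * (brc (2*(n:ℤ)+2) * brc (2*(n:ℤ)+(d:ℤ)+3) * brc ((d:ℤ)+1))
        / (brcFac ((n+d)+n+3) * brcFac (d+1)) := by
    have hB : brcFac ((n+d)+n+3) = brcFac ((n+d)+n+2) * brc (2*(n:ℤ)+(d:ℤ)+3) := by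
      rw [show (n+d)+n+3 = ((n+d)+n+2)+1 from by omega, brcFac_succ,
        show ((((n+d)+n+2 : ℕ) : ℤ)) + 1 = 2*(n:ℤ)+(d:ℤ)+3 from by push_cast; ring]
    have hC : brcFac (d+1) = brcFac d * brc ((d:ℤ)+1) := brcFac_succ d
    have hE : brcFac ((n+d)-n) = brcFac d := congrArg brcFac (by omega)
    have h1 : brcFac ((n+d)+n+2) ≠ 0 := brcFac_ne_zero _
    have h2 : brcFac d ≠ 0 := brcFac_ne_zero _
    have h3 : brc (2*(n:ℤ)+(d:ℤ)+3) ≠ 0 := brc_ne_zero (by omega)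
    have h4 : brc ((d:ℤ)+1) ≠ 0 := brc_ne_zero (by omega)
    rw [tcoef, hE, hB, hC,
      div_eq_div_iff (mul_ne_zero h1 h2) (mul_ne_zero (mul_ne_zero h1 h3) (mul_ne_zero h2 h4))]
    ring
  rw [c1, c2, c3, c4, ← add_div, ← mul_div_assoc, ← sub_div]
  congr 1
  linear_combination brcFac (2*(n+d)+1) * Lident (n:ℤ) (d:ℤ)

/-- `tcoef` extended to ℤ-indices by zero. -/
noncomputable def tz (k : ℕ) (i : ℤ) : F :=
  if 0 ≤ i ∧ i ≤ (k:ℤ) then tcoef k i.toNat else 0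

/-- `e` extended to ℤ-indices by zero. -/
noncomputable def ez (i : ℤ) : Polynomial F := if 0 ≤ i then e i.toNat else 0

lemma tz_natCast (k n : ℕ) (h : n ≤ k) : tz k (n : ℤ) = tcoef k n := by
  rw [tz, if_pos ⟨Int.natCast_nonneg n, by exact_mod_cast h⟩, Int.toNat_natCast]

lemma tz_of_not (k : ℕ) (i : ℤ) (h : ¬ (0 ≤ i ∧ i ≤ (k:ℤ))) : tz k i = 0 := by
  rw [tz, if_neg h]

lemma ez_natCast (n : ℕ) : ez (n : ℤ) = e n := by
  rw [ez, if_pos (Int.natCast_nonneg n), Int.toNat_natCast]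

lemma ez_neg_one : ez (-1) = 0 := by rw [ez, if_neg (by omega)]

lemma e_rec (m : ℕ) : e (m+2) = Polynomial.X * e (m+1) - e m := by rw [e]

lemma X_mul_ez (i : ℤ) (h : 0 ≤ i) :
    Polynomial.X * ez i = ez (i+1) + ez (i-1) := by
  lift i to ℕ using h with n
  rcases n with _ | m
  · have h0 : ((0:ℕ):ℤ) = 0 := rfl
    rw [h0, zero_sub, ez_neg_one, show (0:ℤ)+1 = ((1:ℕ):ℤ) from rfl,
      ez_natCast, show (0:ℤ) = ((0:ℕ):ℤ) from rfl, ez_natCast]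
    show Polynomial.X * e 0 = e 1 + 0
    rw [show e 0 = 1 from rfl, show e 1 = Polynomial.X from rfl, mul_one, add_zero]
  · rw [show ((m+1:ℕ):ℤ)+1 = ((m+2:ℕ):ℤ) from by push_cast; ring,
      show ((m+1:ℕ):ℤ)-1 = ((m:ℕ):ℤ) from by push_cast; ring,
      ez_natCast, ez_natCast, ez_natCast, e_rec]
    ring

/-- The coefficient recurrence, ℤ-indexed form. -/
lemma star (k : ℕ) (i : ℤ) (h0 : 0 ≤ i) (h1 : i ≤ (k:ℤ)+1) :
    tz (k+1) i = tz k (i-1) + tz k (i+1) - lam (2*(k:ℤ)) * tz k i := by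
  lift i to ℕ using h0 with n
  have hn : n ≤ k+1 := by exact_mod_cast h1
  by_cases hnk : n = k+1
  · subst hnk
    rw [tz_natCast (k+1) (k+1) le_rfl, tcoef_self,
      show ((k+1:ℕ):ℤ)-1 = ((k:ℕ):ℤ) from by push_cast; ring,
      tz_natCast k k le_rfl, tcoef_self,
      tz_of_not k (((k+1:ℕ):ℤ)+1) (by push_cast; omega),
      tz_of_not k ((k+1:ℕ):ℤ) (by push_cast; omega)]
    ring
  · have hnk' : n ≤ k := by omega
    obtain ⟨d, rfl⟩ := Nat.exists_eq_add_of_le hnk'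
    have e1 : tz (n+d) ((n:ℤ)-1) = (if n = 0 then 0 else tcoef (n+d) (n-1)) := by
      rcases n with _ | m
      · rw [if_pos rfl]
        exact tz_of_not _ _ (by omega)
      · rw [if_neg (Nat.succ_ne_zero m), Nat.succ_sub_one,
          show ((m+1:ℕ):ℤ)-1 = ((m:ℕ):ℤ) from by push_cast; ring,
          tz_natCast _ _ (by omega)]
    have e2 : tz (n+d) ((n:ℤ)+1) = (if d = 0 then 0 else tcoef (n+d) (n+1)) := by
      rcases d with _ | ed
      · rw [if_pos rfl]
        exact tz_of_not _ _ (by push_cast; omega)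
      · rw [if_neg (Nat.succ_ne_zero ed),
          show ((n:ℕ):ℤ)+1 = ((n+1:ℕ):ℤ) from by push_cast; ring,
          tz_natCast _ _ (by omega)]
    rw [tz_natCast (n+d+1) n (by omega), tz_natCast (n+d) n (by omega), e1, e2,
      show (2*((n+d:ℕ):ℤ)) = 2*(n:ℤ)+2*(d:ℤ) from by push_cast; ring]
    exact star' n d

/-- The inductive step. -/
lemma Ssucc (k : ℕ) :
    (∑ i ∈ Finset.range (k+1), Polynomial.C (tcoef k i) * e i)
      * (Polynomial.X - Polynomial.C (lam (2*(k:ℤ))))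
    = ∑ i ∈ Finset.range (k+1+1), Polynomial.C (tcoef (k+1) i) * e i := by
  have hS : ∀ (K:ℕ), ∑ i ∈ Finset.range (K+1), Polynomial.C (tcoef K i) * e i
      = ∑ i ∈ Finset.range (K+1), Polynomial.C (tz K (i:ℤ)) * ez (i:ℤ) := by
    intro K
    refine Finset.sum_congr rfl (fun i hi => ?_)
    rw [Finset.mem_range] at hi
    rw [tz_natCast K i (by omega), ez_natCast]
  rw [hS k, hS (k+1)]
  have hRHS : ∑ i ∈ Finset.range (k+1+1), Polynomial.C (tz (k+1) (i:ℤ)) * ez (i:ℤ)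
      = (∑ i ∈ Finset.range (k+1+1), Polynomial.C (tz k ((i:ℤ)-1)) * ez (i:ℤ))
        + (∑ i ∈ Finset.range (k+1+1), Polynomial.C (tz k ((i:ℤ)+1)) * ez (i:ℤ))
        - Polynomial.C (lam (2*(k:ℤ))) * ∑ i ∈ Finset.range (k+1+1), Polynomial.C (tz k (i:ℤ)) * ez (i:ℤ) := by
    rw [← Finset.sum_add_distrib, Finset.mul_sum, ← Finset.sum_sub_distrib]
    refine Finset.sum_congr rfl (fun i hi => ?_)
    rw [Finset.mem_range] at hi
    rw [star k (i:ℤ) (Int.natCast_nonneg i) (by exact_mod_cast Nat.lt_succ_iff.mp hi)]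
    rw [map_sub, map_add, map_mul]
    ring
  rw [hRHS]
  -- sum P1
  have P1 : ∑ i ∈ Finset.range (k+1+1), Polynomial.C (tz k ((i:ℤ)-1)) * ez (i:ℤ)
      = ∑ i ∈ Finset.range (k+1), Polynomial.C (tz k (i:ℤ)) * ez ((i:ℤ)+1) := by
    rw [Finset.sum_range_succ']
    rw [show ((0:ℕ):ℤ)-1 = -1 from rfl, tz_of_not k (-1) (by omega), map_zero, zero_mul, add_zero]
    refine Finset.sum_congr rfl (fun i hi => ?_)
    rw [show ((i+1:ℕ):ℤ)-1 = ((i:ℕ):ℤ) from by push_cast; ring,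
      show ((i+1:ℕ):ℤ) = ((i:ℕ):ℤ)+1 from by push_cast; ring]
  have P2 : ∑ i ∈ Finset.range (k+1+1), Polynomial.C (tz k ((i:ℤ)+1)) * ez (i:ℤ)
      = ∑ i ∈ Finset.range (k+1), Polynomial.C (tz k (i:ℤ)) * ez ((i:ℤ)-1) := by
    rw [Finset.sum_range_succ, tz_of_not k (((k+1:ℕ):ℤ)+1) (by push_cast; omega),
      map_zero, zero_mul, add_zero]
    rw [Finset.sum_range_succ, tz_of_not k (((k:ℕ):ℤ)+1) (by omega),
      map_zero, zero_mul, add_zero]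
    rw [Finset.sum_range_succ' _ k]
    rw [show ((0:ℕ):ℤ)-1 = -1 from rfl, ez_neg_one, mul_zero, add_zero]
    refine Finset.sum_congr rfl (fun i hi => ?_)
    rw [show ((i+1:ℕ):ℤ)-1 = ((i:ℕ):ℤ) from by push_cast; ring,
      show ((i+1:ℕ):ℤ) = ((i:ℕ):ℤ)+1 from by push_cast; ring]
  have P3 : ∑ i ∈ Finset.range (k+1+1), Polynomial.C (tz k (i:ℤ)) * ez (i:ℤ)
      = ∑ i ∈ Finset.range (k+1), Polynomial.C (tz k (i:ℤ)) * ez (i:ℤ) := by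
    rw [Finset.sum_range_succ, tz_of_not k ((k+1:ℕ):ℤ) (by push_cast; omega),
      map_zero, zero_mul, add_zero]
  rw [P1, P2, P3, mul_sub, Finset.sum_mul]
  have LHS1 : ∑ i ∈ Finset.range (k+1), (Polynomial.C (tz k (i:ℤ)) * ez (i:ℤ)) * Polynomial.X
      = (∑ i ∈ Finset.range (k+1), Polynomial.C (tz k (i:ℤ)) * ez ((i:ℤ)+1))
        + ∑ i ∈ Finset.range (k+1), Polynomial.C (tz k (i:ℤ)) * ez ((i:ℤ)-1) := by
    rw [← Finset.sum_add_distrib]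
    refine Finset.sum_congr rfl (fun i hi => ?_)
    rw [mul_assoc, mul_comm (ez (i:ℤ)) Polynomial.X, X_mul_ez (i:ℤ) (Int.natCast_nonneg i), mul_add]
  rw [LHS1]
  ring

/-- For every `k ≥ 0`, `R_k = Σ_{i=0}^k t_{k,i} e_i` in `F[z]`. -/
theorem stmt0 (k : ℕ) :
    R k = ∑ i ∈ Finset.range (k + 1), Polynomial.C (tcoef k i) * e i := by
  induction k with
  | zero =>
      rw [R, Finset.prod_range_zero, Finset.sum_range_one, tcoef_self, map_one, one_mul]
      rfl
  | succ k ih =>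
      rw [R, Finset.prod_range_succ, ← R, ih, Ssucc]
end
end

section
/- For every integer k ≥ 0 and every odd positive integer s = 2m−1, the element {k}! · c̃'_{k,s/2} of F lies in the subring ℤ[𝔮, 𝔮^{−1}] of integer Laurent polynomials in 𝔮; equivalently, c̃'_{k,s/2} ∈ (1/{k}!) ℤ[𝔮, 𝔮^{−1}]. -/
open Finset

noncomputable section

/-- `c̃'_{k,s/2} = {k}! Σ_{l=0}^k 𝔮^{s l(l+1)} {2l+1} / ({k+l+1}! {k-l}!)` for `s` an odd
positive integer. -/
def ctil (k s : ℕ) : F :=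
  brcFac k * ∑ l ∈ Finset.range (k + 1),
    qv ^ (s * l * (l + 1)) * brc (2 * (l : ℤ) + 1) / (brcFac (k + l + 1) * brcFac (k - l))

lemma qv_pow_ne_one_s10 {n : ℕ} (hn : 1 ≤ n) : qv ^ n ≠ 1 := by
  intro h
  have h1 : (algebraMap (Polynomial ℚ) F) (Polynomial.X ^ n) = (algebraMap (Polynomial ℚ) F) 1 := by
    simp only [map_pow, map_one, RatFunc.algebraMap_X]
    exact h
  have h2 := RatFunc.algebraMap_injective ℚ h1
  have h3 := congrArg Polynomial.natDegree h2
  simp [Polynomial.natDegree_X_pow] at h3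
  omega

lemma qq_pow_ne_one {n : ℕ} (hn : 1 ≤ n) : qq ^ n ≠ 1 := by
  have : qq ^ n = qv ^ (2 * n) := by rw [qq, ← pow_mul]
  rw [this]
  exact qv_pow_ne_one_s10 (by omega)

lemma one_sub_qq_pow_ne_zero {n : ℕ} (hn : 1 ≤ n) : (1 : F) - qq ^ n ≠ 0 := by
  intro h
  have : qq ^ n = 1 := by linear_combination -h
  exact qq_pow_ne_one hn this

lemma poch_qq_ne_zero (n : ℕ) : poch qq n ≠ 0 := by
  rw [poch]
  apply Finset.prod_ne_zero_iff.mpr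
  intro j _
  have : qq * qq ^ j = qq ^ (j + 1) := by ring
  rw [this]
  exact one_sub_qq_pow_ne_zero (by omega)

-- ### membership
abbrev SS : Subring F := Subring.closure ({qv, qv⁻¹} : Set F)

lemma qv_mem : qv ∈ SS := Subring.subset_closure (by simp)
lemma qv_inv_mem : qv⁻¹ ∈ SS := Subring.subset_closure (by simp)
lemma qq_mem : qq ∈ SS := by rw [qq]; exact pow_mem qv_mem 2
lemma qq_pow_mem (n : ℕ) : qq ^ n ∈ SS := pow_mem qq_mem n
lemma poch_qq_mem (n : ℕ) : poch qq n ∈ SS := by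
  rw [poch]
  exact prod_mem (fun j _ => sub_mem (one_mem _) (mul_mem qq_mem (qq_pow_mem j)))

-- ### conversion {n}! ↔ (Q;Q)_n
/-- triangular numbers -/
def en : ℕ → ℕ
  | 0 => 0
  | n + 1 => en n + (n + 1)

lemma en_doubling (n : ℕ) : 2 * en n = n * (n + 1) := by
  induction n with
  | zero => simp [en]
  | succ n ih => rw [en]; nlinarith [ih]

lemma brc_nat (n : ℕ) : qv ^ n * brc (n : ℤ) = qq ^ n - 1 := by
  rw [brc, zpow_natCast]
  have h1 : qv ^ n * (qv ^ (-(n : ℤ))) = 1 := by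
    rw [zpow_neg, zpow_natCast]
    exact mul_inv_cancel₀ (pow_ne_zero n qv_ne_zero)
  have h2 : qq ^ n = qv ^ n * qv ^ n := by rw [qq, ← pow_add, ← pow_mul]; ring_nf
  rw [mul_sub, h1, h2]

lemma brcFac_eq (n : ℕ) : qv ^ en n * brcFac n = (-1) ^ n * poch qq n := by
  induction n with
  | zero => simp [en, brcFac, poch]
  | succ n ih =>
    have hb : brcFac (n + 1) = brcFac n * brc ((n : ℤ) + 1) := by
      rw [brcFac, brcFac, Finset.prod_range_succ]
    have hp : poch qq (n + 1) = poch qq n * (1 - qq ^ (n + 1)) := by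
      rw [poch, poch, Finset.prod_range_succ]
      congr 1
      ring
    have hbn : ((n : ℤ) + 1) = ((n + 1 : ℕ) : ℤ) := by push_cast; ring
    have hen : en (n + 1) = en n + (n + 1) := rfl
    rw [hb, hp, hen, pow_add, hbn]
    calc qv ^ en n * qv ^ (n + 1) * (brcFac n * brc ((n + 1 : ℕ) : ℤ))
        = (qv ^ en n * brcFac n) * (qv ^ (n + 1) * brc ((n + 1 : ℕ) : ℤ)) := by ring
      _ = ((-1) ^ n * poch qq n) * (qq ^ (n + 1) - 1) := by rw [ih, brc_nat]
      _ = (-1) ^ (n + 1) * (poch qq n * (1 - qq ^ (n + 1))) := by ring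

-- ### poch lemmas
lemma poch_succ (x : F) (n : ℕ) : poch x (n + 1) = poch x n * (1 - x * qq ^ n) :=
  Finset.prod_range_succ _ n

lemma poch_succ' (x : F) (n : ℕ) : poch x (n + 1) = (1 - x) * poch (x * qq) n := by
  rw [poch, poch, Finset.prod_range_succ']
  simp only [pow_zero, mul_one]
  rw [mul_comm]
  congr 1
  apply Finset.prod_congr rfl
  intro j _
  congr 1
  ring

lemma poch_add (x : F) (a b : ℕ) : poch x (a + b) = poch x a * poch (x * qq ^ a) b := by
  induction b with
  | zero => simp [poch]
  | succ b ih =>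
    have : a + (b + 1) = (a + b) + 1 := by omega
    rw [this, poch_succ, ih, poch_succ, mul_assoc]
    congr 2
    rw [mul_assoc, ← pow_add]

lemma pochQ_add (a b : ℕ) : poch qq (a + b) = poch qq a * poch (qq ^ (a + 1)) b := by
  rw [poch_add]
  congr 2
  rw [← pow_succ']

-- ### qbinom lemmas
lemma qbinom_zero (n : ℕ) : qbinom n 0 = 1 := by
  have : poch qq 0 = 1 := by simp [poch]
  rw [qbinom, Nat.sub_zero, this, one_mul, div_self (poch_qq_ne_zero n)]

lemma qbinom_self (n : ℕ) : qbinom n n = 1 := by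
  have : poch qq 0 = 1 := by simp [poch]
  rw [qbinom, Nat.sub_self, this, mul_one, div_self (poch_qq_ne_zero n)]

lemma qbinom_pascal {n i : ℕ} (h : i + 1 ≤ n) :
    qbinom (n + 1) (i + 1) = qbinom n i + qq ^ (i + 1) * qbinom n (i + 1) := by
  obtain ⟨d, rfl⟩ : ∃ d, n = i + 1 + d := ⟨n - (i + 1), by omega⟩
  have e1 : i + 1 + d + 1 - (i + 1) = d + 1 := by omega
  have e2 : i + 1 + d - i = d + 1 := by omega
  have e3 : i + 1 + d - (i + 1) = d := by omega
  rw [qbinom, qbinom, qbinom, e1, e2, e3]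
  have hp1 : poch qq (i + 1 + d + 1) = poch qq (i + 1 + d) * (1 - qq ^ (i + 1 + d + 1)) := by
    rw [poch_succ]; congr 2; ring
  have hp2 : poch qq (i + 1) = poch qq i * (1 - qq ^ (i + 1)) := by
    rw [poch_succ]; congr 2; ring
  have hp3 : poch qq (d + 1) = poch qq d * (1 - qq ^ (d + 1)) := by
    rw [poch_succ]; congr 2; ring
  rw [hp1, hp2, hp3]
  have h1 := poch_qq_ne_zero (i + 1 + d)
  have h2 := poch_qq_ne_zero i
  have h3 := poch_qq_ne_zero d
  have h4 := one_sub_qq_pow_ne_zero (show 1 ≤ i + 1 + d + 1 by omega)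
  have h5 := one_sub_qq_pow_ne_zero (show 1 ≤ i + 1 by omega)
  have h6 := one_sub_qq_pow_ne_zero (show 1 ≤ d + 1 by omega)
  field_simp
  ring_nf

lemma qbinom_mem : ∀ n i : ℕ, i ≤ n → qbinom n i ∈ SS := by
  intro n
  induction n with
  | zero => intro i hi; interval_cases i; rw [qbinom_zero]; exact one_mem _
  | succ n ih =>
    intro i hi
    match i with
    | 0 => rw [qbinom_zero]; exact one_mem _
    | j + 1 =>
      rcases Nat.lt_or_ge j n with h | h
      · rw [qbinom_pascal (by omega)]
        exact add_mem (ih j (by omega)) (mul_mem (qq_pow_mem _) (ih (j + 1) (by omega)))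
      · have : j + 1 = n + 1 := by omega
        rw [this, qbinom_self]
        exact one_mem _

-- ### the key polynomial identity (Bailey-type)
lemma SA : ∀ n : ℕ, ∀ a : F,
    ∑ i ∈ range (n + 1), qbinom n i * qq ^ (i * (i - 1)) * a ^ i * poch (a * qq ^ i) (n - i)
      = 1 := by
  intro n
  induction n with
  | zero => intro a; simp [qbinom_zero, poch]
  | succ n ih =>
    intro a
    set A : ℕ → F := fun i => qbinom n i * qq ^ (i * i) * a ^ i * poch (a * qq ^ (i + 1)) (n - i)
      with hA
    have key : ∀ i ∈ range (n + 1), A i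
        = qbinom n i * qq ^ (i * (i - 1)) * (a * qq) ^ i * poch ((a * qq) * qq ^ i) (n - i) := by
      intro i _
      rw [hA]
      have e1 : qq ^ (i * i) = qq ^ (i * (i - 1)) * qq ^ i := by
        rw [← pow_add]; congr 1; cases i <;> simp <;> ring_nf <;> omega
      have e2 : poch (a * qq ^ (i + 1)) (n - i) = poch ((a * qq) * qq ^ i) (n - i) := by
        have : a * qq ^ (i + 1) = (a * qq) * qq ^ i := by ring
        rw [this]
      simp only [e2]
      rw [e1]
      ring
    have IH := ih (a * qq)
    rw [← Finset.sum_congr rfl key] at IH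
    have c0 : qbinom (n + 1) 0 * qq ^ (0 * (0 - 1)) * a ^ 0 * poch (a * qq ^ 0) (n + 1 - 0)
        = A 0 * (1 - a * qq ^ 0) := by
      rw [hA]
      simp only [qbinom_zero, pow_zero, pow_one, mul_one, one_mul, Nat.sub_zero, Nat.zero_mul]
      rw [poch_succ' a n]
      ring
    have ctop : qbinom (n + 1) (n + 1) * qq ^ ((n + 1) * (n + 1 - 1)) * a ^ (n + 1)
          * poch (a * qq ^ (n + 1)) (n + 1 - (n + 1))
        = A n * (a * qq ^ n) := by
      rw [hA]
      simp only [qbinom_self, Nat.sub_self, Nat.add_sub_cancel]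
      have h0 : poch (a * qq ^ (n + 1)) 0 = 1 := by simp [poch]
      rw [h0]
      have e1 : qq ^ ((n + 1) * n) = qq ^ (n * n) * qq ^ n := by rw [← pow_add]; congr 1 <;> ring
      rw [e1]
      ring
    have cmid : ∀ i ∈ range n,
        qbinom (n + 1) (i + 1) * qq ^ ((i + 1) * (i + 1 - 1)) * a ^ (i + 1)
            * poch (a * qq ^ (i + 1)) (n + 1 - (i + 1))
          = A i * (a * qq ^ i) + A (i + 1) * (1 - a * qq ^ (i + 1)) := by
      intro i hi
      have hin : i + 1 ≤ n := by simpa using Finset.mem_range.mp hi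
      rw [qbinom_pascal hin, hA]
      simp only [Nat.add_sub_cancel]
      have hsub : n + 1 - (i + 1) = (n - (i + 1)) + 1 := by omega
      have hpoch : poch (a * qq ^ (i + 1)) (n + 1 - (i + 1))
          = (1 - a * qq ^ (i + 1)) * poch (a * qq ^ (i + 2)) (n - (i + 1)) := by
        rw [hsub, poch_succ']
        have : a * qq ^ (i + 1) * qq = a * qq ^ (i + 2) := by ring
        rw [this]
      have hsub2 : n - i = (n - (i + 1)) + 1 := by omega
      have hpoch2 : poch (a * qq ^ (i + 1)) (n - i)
          = (1 - a * qq ^ (i + 1)) * poch (a * qq ^ (i + 2)) (n - (i + 1)) := by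
        rw [hsub2, poch_succ']
        have : a * qq ^ (i + 1) * qq = a * qq ^ (i + 2) := by ring
        rw [this]
      have e2 : qq ^ ((i + 1) * (i + 1)) = qq ^ ((i + 1) * i) * qq ^ (i + 1) := by
        rw [← pow_add]; congr 1 <;> ring
      have e1 : qq ^ ((i + 1) * i) = qq ^ (i * i) * qq ^ i := by rw [← pow_add]; congr 1 <;> ring
      have e3 : (i + 1) + 1 = i + 2 := by omega
      rw [hpoch, hpoch2]
      simp only [e3, e2, e1]
      ring
    calc ∑ i ∈ range (n + 1 + 1),
          qbinom (n + 1) i * qq ^ (i * (i - 1)) * a ^ i * poch (a * qq ^ i) (n + 1 - i)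
        = (∑ i ∈ range n,
            qbinom (n + 1) (i + 1) * qq ^ ((i + 1) * (i + 1 - 1)) * a ^ (i + 1)
              * poch (a * qq ^ (i + 1)) (n + 1 - (i + 1)))
          + (qbinom (n + 1) 0 * qq ^ (0 * (0 - 1)) * a ^ 0 * poch (a * qq ^ 0) (n + 1 - 0))
          + (qbinom (n + 1) (n + 1) * qq ^ ((n + 1) * (n + 1 - 1)) * a ^ (n + 1)
              * poch (a * qq ^ (n + 1)) (n + 1 - (n + 1))) := by
          rw [Finset.sum_range_succ, Finset.sum_range_succ']
      _ = (∑ i ∈ range n, (A i * (a * qq ^ i) + A (i + 1) * (1 - a * qq ^ (i + 1))))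
          + A 0 * (1 - a * qq ^ 0) + A n * (a * qq ^ n) := by
          rw [Finset.sum_congr rfl cmid, c0, ctop]
      _ = ((∑ i ∈ range n, A (i + 1) * (1 - a * qq ^ (i + 1))) + A 0 * (1 - a * qq ^ 0))
          + ((∑ i ∈ range n, A i * (a * qq ^ i)) + A n * (a * qq ^ n)) := by
          rw [Finset.sum_add_distrib]
          ring
      _ = (∑ i ∈ range (n + 1), A i * (1 - a * qq ^ i))
          + (∑ i ∈ range (n + 1), A i * (a * qq ^ i)) := by
          rw [Finset.sum_range_succ' (fun i => A i * (1 - a * qq ^ i)) n]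
          rw [Finset.sum_range_succ (fun i => A i * (a * qq ^ i)) n]
      _ = ∑ i ∈ range (n + 1), A i := by
          rw [← Finset.sum_add_distrib]
          apply Finset.sum_congr rfl
          intro i _
          ring
      _ = 1 := IH

lemma poch_pow_ne_zero (a b : ℕ) : poch (qq ^ (a + 1)) b ≠ 0 := by
  intro h
  have := pochQ_add a b
  rw [h, mul_zero] at this
  exact poch_qq_ne_zero (a + b) this

lemma star_s10 (l n : ℕ) :
    ∑ i ∈ range (n + 1),
        qq ^ ((l + i) * (l + i) + (l + i)) / (poch qq (n - i) * poch qq i * poch qq (2 * l + i + 1))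
      = qq ^ (l * l + l) / (poch qq n * poch qq (n + 2 * l + 1)) := by
  have hden : poch qq n * poch qq (n + 2 * l + 1) ≠ 0 :=
    mul_ne_zero (poch_qq_ne_zero n) (poch_qq_ne_zero (n + 2 * l + 1))
  rw [eq_div_iff hden, Finset.sum_mul]
  have key : ∀ i ∈ range (n + 1),
      qq ^ ((l + i) * (l + i) + (l + i)) / (poch qq (n - i) * poch qq i * poch qq (2 * l + i + 1))
          * (poch qq n * poch qq (n + 2 * l + 1))
        = qq ^ (l * l + l) * (qbinom n i * qq ^ (i * (i - 1)) * (qq ^ (2 * l + 2)) ^ i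
            * poch (qq ^ (2 * l + 2) * qq ^ i) (n - i)) := by
    intro i hi
    have hin : i ≤ n := by have := Finset.mem_range.mp hi; omega
    have hx : poch qq (n + 2 * l + 1) = poch qq (2 * l + 1) * poch (qq ^ (2 * l + 2)) n := by
      rw [show n + 2 * l + 1 = (2 * l + 1) + n by omega, pochQ_add]
    have hy : poch qq (2 * l + i + 1) = poch qq (2 * l + 1) * poch (qq ^ (2 * l + 2)) i := by
      rw [show 2 * l + i + 1 = (2 * l + 1) + i by omega, pochQ_add]
    have hz : poch (qq ^ (2 * l + 2)) n
        = poch (qq ^ (2 * l + 2)) i * poch (qq ^ (2 * l + 2) * qq ^ i) (n - i) := by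
      conv_lhs => rw [show n = i + (n - i) by omega]
      rw [poch_add]
    have expo : qq ^ (l * l + l) * qq ^ (i * (i - 1)) * (qq ^ (2 * l + 2)) ^ i
        = qq ^ ((l + i) * (l + i) + (l + i)) := by
      rw [← pow_mul, ← pow_add, ← pow_add]
      congr 1
      cases i with
      | zero => ring
      | succ j =>
        simp only [Nat.add_sub_cancel]
        ring
    rw [qbinom, hx, hy, hz]
    have n1 := poch_qq_ne_zero (n - i)
    have n2 := poch_qq_ne_zero i
    have n3 := poch_qq_ne_zero (2 * l + 1)
    have n4 : poch (qq ^ (2 * l + 2)) i ≠ 0 := by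
      have := poch_pow_ne_zero (2 * l + 1) i
      simpa using this
    have n5 : poch (qq ^ (2 * l + 2) * qq ^ i) (n - i) ≠ 0 := by
      have := poch_pow_ne_zero (2 * l + 1 + i) (n - i)
      rw [show 2 * l + 1 + i + 1 = (2 * l + 2) + i by omega, pow_add] at this
      exact this
    have n6 := poch_qq_ne_zero n
    rw [← expo]
    field_simp
  rw [Finset.sum_congr rfl key, ← Finset.mul_sum, SA n (qq ^ (2 * l + 2)), mul_one]

-- ### the Bailey chain sums
noncomputable def Gs (m k : ℕ) : F :=
  ∑ l ∈ range (k + 1),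
    qq ^ (m * l * l + (m - 1) * l) * (1 - qq ^ (2 * l + 1)) / (poch qq (k - l) * poch qq (k + l + 1))

lemma G_rec (m k : ℕ) (hm : 1 ≤ m) :
    Gs (m + 1) k = ∑ j ∈ range (k + 1), qq ^ (j * j + j) / poch qq (k - j) * Gs m j := by
  obtain ⟨m', rfl⟩ : ∃ m', m = m' + 1 := ⟨m - 1, by omega⟩
  set f : ℕ → ℕ → F := fun l j =>
    qq ^ (j * j + j) / poch qq (k - j)
      * (qq ^ ((m' + 1) * l * l + (m' + 1 - 1) * l) * (1 - qq ^ (2 * l + 1))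
          / (poch qq (j - l) * poch qq (j + l + 1))) with hf
  have step0 : ∑ j ∈ range (k + 1), qq ^ (j * j + j) / poch qq (k - j) * Gs (m' + 1) j
      = ∑ j ∈ range (k + 1), ∑ l ∈ range (k + 1), (if l ≤ j then f l j else 0) := by
    apply Finset.sum_congr rfl
    intro j hj
    rw [Gs, Finset.mul_sum]
    have e1 : ∑ l ∈ range (j + 1), (if l ≤ j then f l j else 0)
        = ∑ l ∈ range (k + 1), (if l ≤ j then f l j else 0) := by
      apply Finset.sum_subset
      · intro x hx
        rw [Finset.mem_range] at *
        omega
      · intro x _ hx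
        rw [Finset.mem_range] at hx
        rw [if_neg (by omega)]
    rw [← e1]
    apply Finset.sum_congr rfl
    intro l hl
    rw [if_pos (by have := Finset.mem_range.mp hl; omega), hf]
  have step1 : ∑ j ∈ range (k + 1), ∑ l ∈ range (k + 1), (if l ≤ j then f l j else 0)
      = ∑ l ∈ range (k + 1), ∑ j ∈ range (k + 1), (if l ≤ j then f l j else 0) :=
    Finset.sum_comm
  have step2 : ∀ l ∈ range (k + 1),
      ∑ j ∈ range (k + 1), (if l ≤ j then f l j else 0)
        = qq ^ ((m' + 1 + 1) * l * l + (m' + 1 + 1 - 1) * l) * (1 - qq ^ (2 * l + 1))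
            / (poch qq (k - l) * poch qq (k + l + 1)) := by
    intro l hl
    have hlk : l ≤ k := by have := Finset.mem_range.mp hl; omega
    have e2 : ∑ j ∈ range (k + 1), (if l ≤ j then f l j else 0)
        = ∑ j ∈ Finset.Ico l (k + 1), (if l ≤ j then f l j else 0) := by
      rw [Finset.range_eq_Ico,
        ← Finset.sum_Ico_consecutive _ (Nat.zero_le l) (by omega : l ≤ k + 1)]
      have hz : ∑ j ∈ Finset.Ico 0 l, (if l ≤ j then f l j else 0) = 0 := by
        apply Finset.sum_eq_zero
        intro x hx
        rw [Finset.mem_Ico] at hx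
        rw [if_neg (by omega)]
      rw [hz, zero_add]
    rw [e2, Finset.sum_Ico_eq_sum_range,
      show k + 1 - l = (k - l) + 1 by omega]
    have e4 : ∀ i ∈ range ((k - l) + 1),
        (if l ≤ l + i then f l (l + i) else 0)
          = (qq ^ ((m' + 1) * l * l + (m' + 1 - 1) * l) * (1 - qq ^ (2 * l + 1)))
            * (qq ^ ((l + i) * (l + i) + (l + i))
                / (poch qq ((k - l) - i) * poch qq i * poch qq (2 * l + i + 1))) := by
      intro i hi
      have hik : i ≤ k - l := by have := Finset.mem_range.mp hi; omega
      rw [if_pos (by omega), hf]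
      simp only
      rw [show k - (l + i) = (k - l) - i by omega,
        show l + i - l = i by omega,
        show l + i + l + 1 = 2 * l + i + 1 by omega]
      ring
    rw [Finset.sum_congr rfl e4, ← Finset.mul_sum, star_s10 l (k - l),
      show (k - l) + 2 * l + 1 = k + l + 1 by omega,
      show (m' + 1 + 1) * l * l + (m' + 1 + 1 - 1) * l
        = ((m' + 1) * l * l + (m' + 1 - 1) * l) + (l * l + l) by
          simp only [Nat.add_sub_cancel]; ring,
      pow_add]
    ring
  rw [step0, step1, Finset.sum_congr rfl step2, Gs]

lemma G_one_partial (k : ℕ) : ∀ r, r ≤ k →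
    ∑ l ∈ range r, qq ^ (l * l) * (1 - qq ^ (2 * l + 1)) / (poch qq (k - l) * poch qq (k + l + 1))
      = 1 / (poch qq k * poch qq k) - qq ^ (r * r) / (poch qq (k - r) * poch qq (k + r)) := by
  intro r
  induction r with
  | zero => intro _; simp
  | succ r ih =>
    intro hr
    rw [Finset.sum_range_succ, ih (by omega)]
    obtain ⟨d, rfl⟩ : ∃ d, k = r + 1 + d := ⟨k - r - 1, by omega⟩
    have n1 := poch_qq_ne_zero d
    have n2 := poch_qq_ne_zero (r + 1 + d + r)
    have n1' := poch_qq_ne_zero (d + 1)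
    have n2' := poch_qq_ne_zero (r + 1 + d + r + 1)
    have incr : qq ^ (r * r) * (1 - qq ^ (2 * r + 1))
          / (poch qq (d + 1) * poch qq (r + 1 + d + r + 1))
        = qq ^ (r * r) / (poch qq (d + 1) * poch qq (r + 1 + d + r))
          - qq ^ ((r + 1) * (r + 1)) / (poch qq d * poch qq (r + 1 + d + r + 1)) := by
      rw [div_sub_div _ _ (mul_ne_zero n1' n2) (mul_ne_zero n1 n2'),
        div_eq_div_iff (mul_ne_zero n1' n2') (mul_ne_zero (mul_ne_zero n1' n2) (mul_ne_zero n1 n2'))]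
      rw [poch_succ qq (r + 1 + d + r), poch_succ qq d]
      ring
    rw [show r + 1 + d - r = d + 1 by omega,
      show r + 1 + d - (r + 1) = d by omega,
      show r + 1 + d + (r + 1) = r + 1 + d + r + 1 by omega,
      incr]
    ring

lemma G_one (k : ℕ) : Gs 1 k = 1 / (poch qq k * poch qq k) := by
  rw [Gs, Finset.sum_range_succ]
  have e0 : ∀ l ∈ range k,
      qq ^ (1 * l * l + (1 - 1) * l) * (1 - qq ^ (2 * l + 1)) / (poch qq (k - l) * poch qq (k + l + 1))
        = qq ^ (l * l) * (1 - qq ^ (2 * l + 1)) / (poch qq (k - l) * poch qq (k + l + 1)) := by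
    intro l _
    norm_num
  rw [Finset.sum_congr rfl e0, G_one_partial k k le_rfl]
  rw [show 1 * k * k + (1 - 1) * k = k * k by norm_num,
    Nat.sub_self, show k + k + 1 = (k + k) + 1 by omega, poch_succ qq (k + k)]
  have n1 := poch_qq_ne_zero k
  have n2 := poch_qq_ne_zero (k + k)
  have n3 := one_sub_qq_pow_ne_zero (show 1 ≤ k + k + 1 by omega)
  have h0 : poch qq 0 = 1 := by simp [poch]
  rw [h0, one_mul, one_mul]
  have hx : (1 : F) - qq ^ (2 * k + 1) = 1 - qq * qq ^ (k + k) := by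
    rw [show 2 * k + 1 = (k + k) + 1 by omega, pow_succ']
  have n3' : (1 : F) - qq * qq ^ (k + k) ≠ 0 := by
    rw [← pow_succ']
    exact one_sub_qq_pow_ne_zero (by omega)
  rw [hx]
  have hc : qq ^ (k * k) * (1 - qq * qq ^ (k + k)) / (poch qq (k + k) * (1 - qq * qq ^ (k + k)))
      = qq ^ (k * k) / poch qq (k + k) := by
    rw [mul_div_mul_right _ _ n3']
  rw [hc]
  ring

lemma G_mem : ∀ m, 1 ≤ m → ∀ k, (poch qq k) ^ 2 * Gs m k ∈ SS := by
  intro m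
  induction m with
  | zero => omega
  | succ m ih =>
    intro _ k
    rcases Nat.eq_or_lt_of_le (Nat.one_le_iff_ne_zero.mpr (by omega) : 1 ≤ m + 1) with h | h
    · -- m + 1 = 1
      have hm0 : m = 0 := by omega
      subst hm0
      rw [G_one]
      have : (poch qq k) ^ 2 * (1 / (poch qq k * poch qq k)) = 1 := by
        have := poch_qq_ne_zero k
        field_simp
      rw [this]
      exact one_mem _
    · have hm : 1 ≤ m := by omega
      rw [G_rec m k hm, Finset.mul_sum]
      apply sum_mem
      intro j hj
      have hjk : j ≤ k := by have := Finset.mem_range.mp hj; omega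
      have key : (poch qq k) ^ 2 * (qq ^ (j * j + j) / poch qq (k - j) * Gs m j)
          = qq ^ (j * j + j) * ((qbinom k j) ^ 2 * poch qq (k - j))
            * ((poch qq j) ^ 2 * Gs m j) := by
        rw [qbinom]
        have n1 := poch_qq_ne_zero k
        have n2 := poch_qq_ne_zero j
        have n3 := poch_qq_ne_zero (k - j)
        have hsplit : poch qq k = poch qq j * poch (qq ^ (j + 1)) (k - j) := by
          conv_lhs => rw [show k = j + (k - j) by omega]
          rw [pochQ_add]
        field_simp
      rw [key]
      exact mul_mem (mul_mem (qq_pow_mem _)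
        (mul_mem (pow_mem (qbinom_mem k j hjk) 2) (poch_qq_mem _))) (ih hm j)

-- ### conversion of the summands
lemma en_succ (n : ℕ) : en (n + 1) = en n + (n + 1) := rfl

lemma en_add (a b : ℕ) : en (a + b) = en a + en b + a * b := by
  induction b with
  | zero => simp [en]
  | succ b ih =>
    have : a + (b + 1) = (a + b) + 1 := by omega
    rw [this, en_succ, ih, en_succ]
    ring

lemma fac_ratio (l d : ℕ) :
    (brcFac (l + d)) ^ 2 * (poch qq (l + d + l + 1) * poch qq d)
      = -(qv ^ (l * l + l + (l + d) + 1)) * (poch qq (l + d)) ^ 2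
          * (brcFac (l + d + l + 1) * brcFac d) := by
  have h1 := brcFac_eq (l + d)
  have h2 := brcFac_eq (l + d + l + 1)
  have h3 := brcFac_eq d
  have hA : (qv ^ en (l + d) * brcFac (l + d)) ^ 2 = (poch qq (l + d)) ^ 2 := by
    rw [h1, mul_pow]
    have : (((-1 : F)) ^ (l + d)) ^ 2 = 1 := by
      rw [← pow_mul, mul_comm, pow_mul]
      norm_num
    rw [this, one_mul]
  have hB : (qv ^ en (l + d + l + 1) * brcFac (l + d + l + 1)) * (qv ^ en d * brcFac d)
      = -(poch qq (l + d + l + 1) * poch qq d) := by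
    rw [h2, h3]
    have ho : ((-1 : F)) ^ (l + d + l + 1 + d) = -1 := Odd.neg_one_pow ⟨l + d, by ring⟩
    calc ((-1) ^ (l + d + l + 1) * poch qq (l + d + l + 1)) * ((-1) ^ d * poch qq d)
        = ((-1 : F)) ^ (l + d + l + 1 + d) * (poch qq (l + d + l + 1) * poch qq d) := by
          rw [pow_add]; ring
      _ = -(poch qq (l + d + l + 1) * poch qq d) := by rw [ho]; ring
  have hE : l * l + l + (l + d) + 1 + en (l + d) + en (l + d) = en (l + d + l + 1) + en d := by
    have e1 : en (l + d + l + 1) = en (l + d + l) + (l + d + l + 1) := rfl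
    have e2 : en (l + d + l) = en (l + d) + en l + (l + d) * l := en_add (l + d) l
    have e3 : en (l + d) = en l + en d + l * d := en_add l d
    rw [e1, e2, e3]
    ring
  have hQ : qv ^ (l * l + l + (l + d) + 1) * qv ^ en (l + d) * qv ^ en (l + d)
      = qv ^ en (l + d + l + 1) * qv ^ en d := by
    rw [← pow_add, ← pow_add, ← pow_add, hE]
  apply mul_left_cancel₀ (pow_ne_zero
    (en (l + d) + en (l + d) + (en (l + d + l + 1) + en d)) qv_ne_zero)
  calc qv ^ (en (l + d) + en (l + d) + (en (l + d + l + 1) + en d))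
        * ((brcFac (l + d)) ^ 2 * (poch qq (l + d + l + 1) * poch qq d))
      = (qv ^ en (l + d) * brcFac (l + d)) ^ 2
          * (poch qq (l + d + l + 1) * poch qq d) * (qv ^ en (l + d + l + 1) * qv ^ en d) := by
        ring
    _ = (poch qq (l + d)) ^ 2
          * (poch qq (l + d + l + 1) * poch qq d) * (qv ^ en (l + d + l + 1) * qv ^ en d) := by
        rw [hA]
    _ = (poch qq (l + d)) ^ 2 * (poch qq (l + d + l + 1) * poch qq d)
          * (qv ^ (l * l + l + (l + d) + 1) * qv ^ en (l + d) * qv ^ en (l + d)) := by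
        rw [hQ]
    _ = ((qv ^ en (l + d + l + 1) * brcFac (l + d + l + 1)) * (qv ^ en d * brcFac d))
          * (-(qv ^ (l * l + l + (l + d) + 1))) * (poch qq (l + d)) ^ 2
          * (qv ^ en (l + d) * qv ^ en (l + d)) := by
        rw [hB]
        ring
    _ = qv ^ (en (l + d) + en (l + d) + (en (l + d + l + 1) + en d))
        * (-(qv ^ (l * l + l + (l + d) + 1)) * (poch qq (l + d)) ^ 2
            * (brcFac (l + d + l + 1) * brcFac d)) := by
        ring

lemma term_conv (l d m' : ℕ) :
    brcFac (l + d) * brcFac (l + d) *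
      (qv ^ ((2 * (m' + 1) - 1) * l * (l + 1)) * brc (2 * (l : ℤ) + 1)
        / (brcFac (l + d + l + 1) * brcFac d))
    = qv ^ (l + d) * ((poch qq (l + d)) ^ 2 *
        (qq ^ ((m' + 1) * l * l + (m' + 1 - 1) * l) * (1 - qq ^ (2 * l + 1))
          / (poch qq d * poch qq (l + d + l + 1)))) := by
  have hb : qv ^ (2 * l + 1) * brc (2 * (l : ℤ) + 1) = qq ^ (2 * l + 1) - 1 := by
    have h := brc_nat (2 * l + 1)
    have hc : ((2 * l + 1 : ℕ) : ℤ) = 2 * (l : ℤ) + 1 := by push_cast; ring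
    rwa [hc] at h
  have hfr := fac_ratio l d
  rw [show 2 * (m' + 1) - 1 = 2 * m' + 1 by omega, show m' + 1 - 1 = m' by omega]
  have n1 := brcFac_ne_zero (l + d + l + 1)
  have n2 := brcFac_ne_zero d
  have n3 := poch_qq_ne_zero d
  have n4 := poch_qq_ne_zero (l + d + l + 1)
  simp only [qq] at hb hfr n3 n4 ⊢
  field_simp
  linear_combination (brc (2 * (l : ℤ) + 1) * qv ^ (l + l * l + 2 * l * m' + 2 * l * l * m')) * hfr
    - (qv ^ (2 * l * l * m' + 2 * l * m' + 2 * l * l + l + d) * (poch (qv ^ 2) (l + d)) ^ 2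
        * (brcFac (l + d + l + 1) * brcFac d)) * hb

lemma key_eq (k m : ℕ) (hm : 1 ≤ m) :
    brcFac k * ctil k (2 * m - 1) = qv ^ k * ((poch qq k) ^ 2 * Gs m k) := by
  obtain ⟨m', rfl⟩ : ∃ m', m = m' + 1 := ⟨m - 1, by omega⟩
  rw [ctil, Gs, ← mul_assoc, Finset.mul_sum, Finset.mul_sum, Finset.mul_sum]
  apply Finset.sum_congr rfl
  intro l hl
  have hlk : l ≤ k := by have := Finset.mem_range.mp hl; omega
  obtain ⟨d, rfl⟩ : ∃ d, k = l + d := ⟨k - l, by omega⟩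
  rw [show l + d - l = d by omega]
  exact term_conv l d m'

/-- For `k ≥ 0` and odd positive `s = 2m-1`, `{k}! ⬝ c̃'_{k,s/2}` is an integer Laurent
polynomial in `𝔮`. -/
theorem stmt10 (k m : ℕ) (hm : 1 ≤ m) :
    brcFac k * ctil k (2 * m - 1) ∈ Subring.closure ({qv, qv⁻¹} : Set F) := by
  rw [key_eq k m hm]
  exact mul_mem (pow_mem qv_mem k) (G_mem m hm k)
end
end
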